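/- Let F be a finite set of cardinality N ≥ 1 and let P_θ, θ∈F, be probability measures on a measurable space 𝒳 dominated by a σ-finite measure μ. Then the uniform-prior Bayes testing risk satisfies r̄ ≥ 1 − 1/N − (1/√N)·√( inf_Q Σ_{θ∈F} χ²(P_θ||Q) / N ), where the infimum is over all probability measures Q on 𝒳. -/

import Mathlib

open MeasureTheory Real
open scoped ENNReal NNReal

/-- The chi-squared divergence `χ²(P‖Q) = ∫ (dP/dQ)² dQ - 1` (real-valued; meaningful when
`P ≪ Q` and the integrand is integrable, in which case it agrees with the usual definition;
otherwise the usual `χ²` is `+∞` and the bound is trivially true). -/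
noncomputable def chiSqDivR {X : Type*} [MeasurableSpace X] (P Q : Measure X) : ℝ :=
  ∫ x, (((P.rnDeriv Q x).toReal) ^ 2 - 1) ∂Q

/-- The uniform-prior Bayes testing risk `r̄ = inf_T (1/N) Σ_θ P_θ {T ≠ θ}`, the infimum
being over all measurable tests `T : X → F`. -/
noncomputable def bayesRisk {X F : Type*} [MeasurableSpace X] [Fintype F]
    (P : F → Measure X) : ℝ :=
  ⨅ T : {T : X → F // ∀ θ, MeasurableSet {x | T x = θ}},
    (Fintype.card F : ℝ)⁻¹ * ∑ θ, (P θ {x | T.1 x ≠ θ}).toReal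

theorem cs_setIntegral {X : Type*} [MeasurableSpace X] (Q : Measure X) [IsProbabilityMeasure Q]
    {A : Set X} (hA : MeasurableSet A) {g : X → ℝ} (hg : MemLp g 2 Q) :
    ∫ x in A, g x ∂Q ≤ Real.sqrt (Q A).toReal * Real.sqrt (∫ x, g x ^ 2 ∂Q) := by
  have hpq : (2:ℝ).HolderConjugate 2 := Real.HolderConjugate.two_two
  have hind : MemLp (A.indicator (fun _ => (1:ℝ))) (ENNReal.ofReal 2) Q := by
    rw [show ENNReal.ofReal 2 = 2 by norm_num]
    exact memLp_indicator_const 2 hA 1 (Or.inr (measure_ne_top Q A))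
  have hg2 : MemLp g (ENNReal.ofReal 2) Q := by
    rw [show ENNReal.ofReal 2 = 2 by norm_num]; exact hg
  have key := integral_mul_norm_le_Lp_mul_Lq hpq hind hg2
  have h1 : ∫ x in A, g x ∂Q ≤ ∫ x, ‖A.indicator (fun _ => (1:ℝ)) x‖ * ‖g x‖ ∂Q := by
    rw [← integral_indicator hA]
    calc ∫ x, A.indicator g x ∂Q ≤ ‖∫ x, A.indicator g x ∂Q‖ := le_abs_self _
    _ ≤ ∫ x, ‖A.indicator g x‖ ∂Q := norm_integral_le_integral_norm _
    _ = ∫ x, ‖A.indicator (fun _ => (1:ℝ)) x‖ * ‖g x‖ ∂Q := by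
        congr 1; ext x
        by_cases hx : x ∈ A <;> simp [Set.indicator_of_mem, Set.indicator_of_notMem, hx]
  have h2 : ∫ x, ‖A.indicator (fun _ => (1:ℝ)) x‖ ^ (2:ℝ) ∂Q = (Q A).toReal := by
    rw [show (fun x => ‖A.indicator (fun _ => (1:ℝ)) x‖ ^ (2:ℝ)) = A.indicator (fun _ => (1:ℝ)) by
      ext x; by_cases hx : x ∈ A <;>
        simp [Set.indicator_of_mem, Set.indicator_of_notMem, hx, Real.rpow_natCast]]
    exact integral_indicator_one (μ := Q) hA
  have h3 : ∫ x, ‖g x‖ ^ (2:ℝ) ∂Q = ∫ x, g x ^ 2 ∂Q := by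
    congr 1; ext x
    rw [show ‖g x‖ ^ (2:ℝ) = ‖g x‖ ^ (2:ℕ) from Real.rpow_natCast _ 2, Real.norm_eq_abs, sq_abs]
  rw [h2, h3] at key
  refine h1.trans (key.trans_eq ?_)
  rw [← Real.sqrt_eq_rpow, ← Real.sqrt_eq_rpow]

/-- chi-squared lower bound, inequality (8):
`r̄ ≥ 1 - 1/N - (1/√N) √( inf_Q Σ_θ χ²(P_θ‖Q) / N )`; the infimum over `Q` is expressed by
universally quantifying over probability measures `Q` (the excluded `Q`'s give `χ² = +∞`). -/
theorem statement8 {X F : Type*} [MeasurableSpace X] [Fintype F] [Nonempty F]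
    (μ : Measure X) [SigmaFinite μ]
    (P : F → Measure X) (hPdom : ∀ θ, P θ ≪ μ) (hPprob : ∀ θ, IsProbabilityMeasure (P θ))
    (N : ℝ) (hN : N = Fintype.card F)
    (Q : Measure X) [IsProbabilityMeasure Q]
    (hAC : ∀ θ, P θ ≪ Q)
    (hInt : ∀ θ, Integrable (fun x => ((P θ).rnDeriv Q x).toReal ^ 2) Q) :
    1 - 1 / N - (Real.sqrt N)⁻¹ * Real.sqrt ((∑ θ, chiSqDivR (P θ) Q) / N) ≤
      bayesRisk P := by
  have := hPprob
  have hNpos : (0:ℝ) < N := by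
    rw [hN]; exact_mod_cast Fintype.card_pos
  set f : F → X → ℝ := fun θ x => ((P θ).rnDeriv Q x).toReal with hf
  have hfmeas : ∀ θ, Measurable (f θ) := fun θ => (Measure.measurable_rnDeriv _ _).ennreal_toReal
  have hfint : ∀ θ, Integrable (f θ) Q := fun θ => Measure.integrable_toReal_rnDeriv
  have hfℒ2 : ∀ θ, MemLp (f θ) 2 Q := fun θ =>
    (memLp_two_iff_integrable_sq (hfmeas θ).aestronglyMeasurable).mpr (hInt θ)
  set g : F → X → ℝ := fun θ x => f θ x - 1 with hg
  have hgℒ2 : ∀ θ, MemLp (g θ) 2 Q := fun θ => (hfℒ2 θ).sub (memLp_const 1)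
  have hgint : ∀ θ, Integrable (g θ) Q := fun θ => (hfint θ).sub (integrable_const 1)
  have hintf : ∀ θ, ∫ x, f θ x ∂Q = 1 := by
    intro θ
    rw [Measure.integral_toReal_rnDeriv (hAC θ)]
    simp
  -- chi θ := ∫ (g θ)², equals chiSqDivR
  have hgsqint : ∀ θ, Integrable (fun x => g θ x ^ 2) Q := by
    intro θ
    have : (fun x => g θ x ^ 2) = fun x => f θ x ^ 2 - 2 * f θ x + 1 := by
      ext x; ring
    rw [this]
    exact (((hInt θ).sub ((hfint θ).const_mul 2)).add (integrable_const 1))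
  have hchi : ∀ θ, chiSqDivR (P θ) Q = ∫ x, g θ x ^ 2 ∂Q := by
    intro θ
    have h1 : ∫ x, g θ x ^ 2 ∂Q = ∫ x, (f θ x ^ 2 - 2 * f θ x + 1) ∂Q := by
      congr 1; ext x; ring
    have hi1 : Integrable (fun x => f θ x ^ 2 - 2 * f θ x) Q := by
      exact (hInt θ).sub ((hfint θ).const_mul 2)
    have hi2 : Integrable (fun x => 2 * f θ x) Q := by exact (hfint θ).const_mul 2
    rw [chiSqDivR, h1, integral_add hi1 (integrable_const 1),
      integral_sub (hInt θ) hi2,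
      integral_sub (hInt θ) (integrable_const 1), integral_const_mul, hintf θ]
    simp only [integral_const, probReal_univ, ENNReal.toReal_one, smul_eq_mul, mul_one]
    ring
  have hchinn : ∀ θ, 0 ≤ chiSqDivR (P θ) Q := by
    intro θ; rw [hchi θ]; exact integral_nonneg fun x => sq_nonneg _
  set S := ∑ θ, chiSqDivR (P θ) Q with hS
  have hSnn : 0 ≤ S := Finset.sum_nonneg fun θ _ => hchinn θ
  -- reduce to bounding each test
  have hne : Nonempty {T : X → F // ∀ θ, MeasurableSet {x | T x = θ}} := by
    refine ⟨⟨fun _ => Classical.arbitrary F, fun θ => ?_⟩⟩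
    by_cases h : Classical.arbitrary F = θ <;> simp [h]
  refine le_ciInf fun T => ?_
  set A : F → Set X := fun θ => {x | T.1 x = θ} with hA
  have hAmeas : ∀ θ, MeasurableSet (A θ) := T.2
  -- sum of Q-measures of the partition is 1
  have hQsum : ∑ θ, (Q (A θ)).toReal = 1 := by
    have h := sum_measure_preimage_singleton (μ := Q) (Finset.univ : Finset F)
      (fun θ _ => hAmeas θ)
    simp only [Finset.coe_univ, Set.preimage_univ, measure_univ] at h
    have : ∑ θ, (Q (A θ)).toReal = (∑ θ, Q (A θ)).toReal :=
      (ENNReal.toReal_sum (fun θ _ => measure_ne_top Q _)).symm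
    rw [this, show ∑ θ, Q (A θ) = ∑ θ, Q (T.1 ⁻¹' {θ}) from rfl, h]
    simp
  -- key bound: ∑ P θ (A θ) ≤ 1 + √S
  have hkey : ∑ θ, (P θ (A θ)).toReal ≤ 1 + Real.sqrt S := by
    have hterm : ∀ θ, (P θ (A θ)).toReal ≤
        (Q (A θ)).toReal + Real.sqrt (Q (A θ)).toReal * Real.sqrt (chiSqDivR (P θ) Q) := by
      intro θ
      have hset : ∫ x in A θ, f θ x ∂Q = (P θ (A θ)).toReal :=
        Measure.setIntegral_toReal_rnDeriv (hAC θ) (A θ)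
      have hsplit : ∫ x in A θ, f θ x ∂Q = (Q (A θ)).toReal + ∫ x in A θ, g θ x ∂Q := by
        have : ∫ x in A θ, f θ x ∂Q = ∫ x in A θ, (1 + g θ x) ∂Q := by
          congr 1; ext x; ring
        rw [this, integral_add (integrable_const 1) ((hgint θ).restrict)]
        simp [Measure.restrict_apply_univ, Measure.real]
      rw [← hset, hsplit, hchi θ]
      exact add_le_add_right (cs_setIntegral Q (hAmeas θ) (hgℒ2 θ)) _
    calc ∑ θ, (P θ (A θ)).toReal
        ≤ ∑ θ, ((Q (A θ)).toReal + Real.sqrt (Q (A θ)).toReal * Real.sqrt (chiSqDivR (P θ) Q)) :=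
          Finset.sum_le_sum fun θ _ => hterm θ
      _ = 1 + ∑ θ, Real.sqrt (Q (A θ)).toReal * Real.sqrt (chiSqDivR (P θ) Q) := by
          rw [Finset.sum_add_distrib, hQsum]
      _ ≤ 1 + Real.sqrt S := by
          gcongr
          have hcs := Finset.sum_mul_sq_le_sq_mul_sq Finset.univ
            (fun θ => Real.sqrt (Q (A θ)).toReal) (fun θ => Real.sqrt (chiSqDivR (P θ) Q))
          have hsq : ∑ θ, Real.sqrt (Q (A θ)).toReal ^ 2 = 1 := by
            rw [← hQsum]; congr 1; ext θ; exact Real.sq_sqrt ENNReal.toReal_nonneg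
          have hsq2 : ∑ θ, Real.sqrt (chiSqDivR (P θ) Q) ^ 2 = S := by
            rw [hS]; congr 1; ext θ; exact Real.sq_sqrt (hchinn θ)
          rw [hsq, hsq2, one_mul] at hcs
          have hnn : 0 ≤ ∑ θ, Real.sqrt (Q (A θ)).toReal * Real.sqrt (chiSqDivR (P θ) Q) :=
            Finset.sum_nonneg fun θ _ => mul_nonneg (Real.sqrt_nonneg _) (Real.sqrt_nonneg _)
          calc ∑ θ, Real.sqrt (Q (A θ)).toReal * Real.sqrt (chiSqDivR (P θ) Q)
              = Real.sqrt ((∑ θ, Real.sqrt (Q (A θ)).toReal * Real.sqrt (chiSqDivR (P θ) Q)) ^ 2) :=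
                (Real.sqrt_sq hnn).symm
            _ ≤ Real.sqrt S := Real.sqrt_le_sqrt hcs
  -- relate the risk to ∑ P θ (A θ)
  have hcompl : ∀ θ, (P θ {x | T.1 x ≠ θ}).toReal = 1 - (P θ (A θ)).toReal := by
    intro θ
    have h1 : P θ (A θ) + P θ (A θ)ᶜ = 1 := by
      rw [measure_add_measure_compl (hAmeas θ)]; simp
    have h2 : (P θ (A θ)).toReal + (P θ (A θ)ᶜ).toReal = 1 := by
      rw [← ENNReal.toReal_add (measure_ne_top _ _) (measure_ne_top _ _), h1]; simp
    have h3 : {x | T.1 x ≠ θ} = (A θ)ᶜ := rfl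
    rw [h3]; linarith
  have hrisk : (Fintype.card F : ℝ)⁻¹ * ∑ θ, (P θ {x | T.1 x ≠ θ}).toReal
      = 1 - N⁻¹ * ∑ θ, (P θ (A θ)).toReal := by
    have : ∑ θ, (P θ {x | T.1 x ≠ θ}).toReal = N - ∑ θ, (P θ (A θ)).toReal := by
      rw [Finset.sum_congr rfl fun θ _ => hcompl θ, Finset.sum_sub_distrib]
      simp [hN]
    rw [this, ← hN, mul_sub, inv_mul_cancel₀ hNpos.ne']
  rw [hrisk]
  have hsqrtS : (Real.sqrt N)⁻¹ * Real.sqrt (S / N) = Real.sqrt S / N := by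
    rw [Real.sqrt_div hSnn, ← Real.sq_sqrt hNpos.le, Real.sqrt_sq (Real.sqrt_nonneg _)]
    field_simp
  rw [hsqrtS]
  have hmul : N⁻¹ * ∑ θ, (P θ (A θ)).toReal ≤ N⁻¹ * (1 + Real.sqrt S) :=
    mul_le_mul_of_nonneg_left hkey (inv_nonneg.mpr hNpos.le)
  have h2 : N⁻¹ * (1 + Real.sqrt S) = 1 / N + Real.sqrt S / N := by field_simp
  linarith [hmul, h2 ▸ hmul]
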